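/- Let $e \ge 3$ and $v_2$ be natural numbers with $\gcd(e, v_2) = 1$ and $v_2 > 6e$. Then there exists an integer $k \ge 1$ such that $v_2 - e < 2 v_2 - 2 e k < v_2 + e$ and $2 v_2 - 2 e k \notin \langle 2e, 3e, v_2 \rangle$. -/

import Mathlib

/-- For `e ≥ 3`, `gcd(e, v₂) = 1` and `v₂ > 6e`, there is `k ≥ 1` with
`v₂ - e < 2v₂ - 2ek < v₂ + e` and `2v₂ - 2ek ∉ ⟨2e, 3e, v₂⟩`. -/
theorem gap_exists_case_e (e v2 : ℕ) (he : 3 ≤ e) (hcop : Nat.gcd e v2 = 1)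
    (hv2 : 6 * e < v2) :
    ∃ k : ℤ, 1 ≤ k ∧
      (v2 : ℤ) - (e : ℤ) < 2 * (v2 : ℤ) - 2 * (e : ℤ) * k ∧
      2 * (v2 : ℤ) - 2 * (e : ℤ) * k < (v2 : ℤ) + (e : ℤ) ∧
      ∀ n ∈ AddSubmonoid.closure ({2 * e, 3 * e, v2} : Set ℕ),
        (n : ℤ) ≠ 2 * (v2 : ℤ) - 2 * (e : ℤ) * k := by
  have he0 : 0 < e := by omega
  have hev : e ≤ v2 := by omega
  set q := (v2 - e) / (2 * e) with hqdef
  set r := (v2 - e) % (2 * e) with hrdef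
  have hdm : 2 * e * q + r = v2 - e := Nat.div_add_mod (v2 - e) (2 * e)
  have hrlt : r < 2 * e := Nat.mod_lt _ (by omega)
  have hedvd_imp : e ∣ v2 → False := by
    intro hdvd
    have : e ∣ Nat.gcd e v2 := Nat.dvd_gcd dvd_rfl hdvd
    rw [hcop] at this
    have := Nat.le_of_dvd one_pos this
    omega
  have hrpos : 0 < r := by
    rcases Nat.eq_zero_or_pos r with h0 | h
    · exfalso
      have h2e : 2 * e ∣ v2 - e := Nat.dvd_of_mod_eq_zero h0
      have hee : e ∣ v2 - e := dvd_trans ⟨2, by ring⟩ h2e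
      have : e ∣ (v2 - e) + e := Dvd.dvd.add hee dvd_rfl
      rw [Nat.sub_add_cancel hev] at this
      exact hedvd_imp this
    · exact h
  -- key identity
  obtain ⟨B, hB⟩ : ∃ B, B = e * q := ⟨_, rfl⟩
  have hdm' : 2 * B + r + e = v2 := by
    have : 2 * e * q = 2 * B := by rw [hB]; ring
    omega
  have hBcast : (B : ℤ) = (e : ℤ) * (q : ℤ) := by rw [hB]; push_cast; ring
  have hdmz : 2 * (B : ℤ) + (r : ℤ) + (e : ℤ) = (v2 : ℤ) := by exact_mod_cast hdm'
  have hkey : 2 * (v2 : ℤ) - 2 * (e : ℤ) * ((q : ℤ) + 1) = (v2 : ℤ) + (r : ℤ) - (e : ℤ) := by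
    have h1 : (e : ℤ) * (q : ℤ) = (B : ℤ) := hBcast.symm
    nlinarith [hdmz, h1]
  -- description of the monoid elements
  have hform : ∀ n ∈ AddSubmonoid.closure ({2 * e, 3 * e, v2} : Set ℕ),
      ∃ t c, n = e * t + c * v2 := by
    intro n hn
    induction hn using AddSubmonoid.closure_induction with
    | mem x hx =>
      rcases hx with h | h | h
      · exact ⟨2, 0, by omega⟩
      · exact ⟨3, 0, by omega⟩
      · exact ⟨0, 1, by simp at h; omega⟩
    | zero => exact ⟨0, 0, by simp⟩
    | add a b _ _ ha hb =>
      obtain ⟨t1, c1, h1⟩ := ha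
      obtain ⟨t2, c2, h2⟩ := hb
      exact ⟨t1 + t2, c1 + c2, by rw [h1, h2]; ring⟩
  refine ⟨(q : ℤ) + 1, by linarith [Int.natCast_nonneg q], ?_, ?_, ?_⟩
  · rw [hkey]
    have : (0 : ℤ) < (r : ℤ) := by exact_mod_cast hrpos
    linarith
  · rw [hkey]
    have : (r : ℤ) < 2 * (e : ℤ) := by exact_mod_cast hrlt
    linarith
  · intro n hn heq
    rw [hkey] at heq
    obtain ⟨t, c, htc⟩ := hform n hn
    have hne : n + e = v2 + r := by omega
    obtain ⟨A, hA⟩ : ∃ A, A = e * t := ⟨_, rfl⟩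
    rcases c with _ | _ | c
    · -- c = 0
      have h2v : 2 * v2 = A + 2 * B + 2 * e := by omega
      have hdvd : e ∣ 2 * v2 := ⟨t + 2 * q + 2, by rw [h2v, hA, hB]; ring⟩
      have h2 := (Nat.Coprime.dvd_of_dvd_mul_right hcop hdvd)
      have := Nat.le_of_dvd (by norm_num) h2
      omega
    · -- c = 1
      have hv : v2 = A + 2 * B + 2 * e := by omega
      have hdvd : e ∣ v2 := ⟨t + 2 * q + 2, by rw [hv, hA, hB]; ring⟩
      exact hedvd_imp hdvd
    · -- c ≥ 2 : impossible since then n ≥ 2 v2 > v2 + e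
      exfalso
      have h2 : 2 * v2 ≤ (c + 1 + 1) * v2 :=
        Nat.mul_le_mul_right v2 (by omega : 2 ≤ c + 1 + 1)
      omega
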